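/- Let G be a finite solvable A-group, let p be a prime, let F = F(G) be the Fitting subgroup of G and F_2 = F_2(G) the second Fitting subgroup (so F_2/F = F(G/F)). If g ∈ F_2 is such that Ind(F_2, g) is a power of p, then p does not divide Ind(G/F, gF), i.e. Ind(G/F, gF)_p = 1. -/

import Mathlib

/-!
Common definitions: the set `N(G)` of conjugacy class sizes, `A`-groups,
the largest `p`-power `|G||_p` dividing an element of `N(G)`, the Fitting subgroup,
and the natural conjugation action of `G ⧸ H` on an abelian normal subgroup `H`
(used to form the semidirect product `H ⋊ G/H`).
-/

/-- `N(G)`: the set of conjugacy class sizes (indices of centralizers) of `G`. -/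
def indexSet (G : Type*) [Group G] : Set ℕ :=
  {n | ∃ x : G, n = (Subgroup.centralizer {x}).index}

/-- A finite group is an `A`-group if all its Sylow subgroups are abelian. -/
def IsAGroup (G : Type*) [Group G] : Prop :=
  ∀ (p : ℕ), p.Prime → ∀ P : Sylow p G, ∀ a b : (P : Subgroup G), a * b = b * a

/-- `|G||_p`: the highest power of `p` dividing some element of `N(G)`. -/
noncomputable def maxPPart (G : Type*) [Group G] (p : ℕ) : ℕ :=
  sSup {m | (∃ k : ℕ, m = p ^ k) ∧ ∃ n ∈ indexSet G, m ∣ n}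

open scoped Classical in
/-- The natural action of `G ⧸ H` on an abelian normal subgroup `H`, induced by
conjugation (`h ↦ g * h * g⁻¹`); it is used to form the semidirect product `H ⋊ G/H`.
(Junk value — the trivial action — if `H` is not abelian; see `quotConj_eq` below.) -/
noncomputable def quotConj (G : Type*) [Group G] (H : Subgroup G) [H.Normal] :
    G ⧸ H →* MulAut ↥H :=
  if h : H ≤ (MulAut.conjNormal (H := H)).ker then
    QuotientGroup.lift H MulAut.conjNormal h
  else 1

/-- When `H` is abelian, `quotConj` is indeed the conjugation action `h ↦ g * h * g⁻¹`. -/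
theorem quotConj_eq (G : Type*) [Group G] (H : Subgroup G) [H.Normal]
    (hab : ∀ a b : ↥H, a * b = b * a) (g : G) :
    quotConj G H (g : G ⧸ H) = MulAut.conjNormal g := by
  have hker : H ≤ (MulAut.conjNormal (H := H)).ker := by
    intro x hx
    rw [MonoidHom.mem_ker]
    ext y
    have h2 : x * (y : G) = (y : G) * x := congrArg Subtype.val (hab ⟨x, hx⟩ y)
    simp only [MulAut.conjNormal_apply, MulAut.one_apply]
    rw [mul_inv_eq_iff_eq_mul]
    exact h2
  rw [quotConj, dif_pos hker]
  rfl

/-- The Fitting subgroup: the join of all normal nilpotent subgroups. -/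
def fitting (G : Type*) [Group G] : Subgroup G :=
  ⨆ H ∈ {H : Subgroup G | H.Normal ∧ Group.IsNilpotent ↥H}, H

instance fitting_normal (G : Type*) [Group G] : (fitting G).Normal := by
  constructor
  intro n hn g
  rw [fitting, iSup_subtype'] at hn ⊢
  refine Subgroup.iSup_induction _
    (C := fun x => g * x * g⁻¹ ∈
      ⨆ H : {H : Subgroup G | H.Normal ∧ Group.IsNilpotent ↥H}, (H : Subgroup G))
    hn (fun H x hx => ?_) ?_ (fun x y hx hy => ?_)
  · exact Subgroup.mem_iSup_of_mem H (H.2.1.conj_mem x hx g)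
  · simpa using Subgroup.one_mem _
  · have h2 := Subgroup.mul_mem _ hx hy
    have h3 : g * (x * y) * g⁻¹ = (g * x * g⁻¹) * (g * y * g⁻¹) := by group
    show g * (x * y) * g⁻¹ ∈ _
    rwa [h3]

section AuxLemmas

variable {G : Type*} [Group G]

/-- In an `A`-group, any two elements of a common `p`-subgroup commute. -/
lemma aux_pgroup_comm [Finite G] (hA : IsAGroup G) {q : ℕ} (hq : q.Prime)
    {H : Subgroup G} (hH : IsPGroup q H) {a b : G} (ha : a ∈ H) (hb : b ∈ H) :
    a * b = b * a := by
  obtain ⟨Q, hQ⟩ := hH.exists_le_sylow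
  exact congrArg Subtype.val (hA q hq Q ⟨a, hQ ha⟩ ⟨b, hQ hb⟩)

/-- In a finite `A`-group, any two elements of a common nilpotent subgroup commute. -/
lemma aux_nilpotent_comm [Finite G] (hA : IsAGroup G) {N : Subgroup G}
    (hN : Group.IsNilpotent ↥N) {a b : G} (ha : a ∈ N) (hb : b ∈ N) :
    a * b = b * a := by
  obtain ⟨e⟩ := ((isNilpotent_of_finite_tfae (G := ↥N)).out 0 4).mp hN
  set a' : ↥N := ⟨a, ha⟩
  set b' : ↥N := ⟨b, hb⟩
  have hcomm : e.symm a' * e.symm b' = e.symm b' * e.symm a' := by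
    funext q P
    have hq : (q : ℕ).Prime := Nat.prime_of_mem_primeFactors q.2
    set u := e.symm a' q P
    set v := e.symm b' q P
    have hmap : IsPGroup (q : ℕ) ((P : Subgroup ↥N).map N.subtype) := P.2.map N.subtype
    have hu : ((u : ↥N) : G) ∈ (P : Subgroup ↥N).map N.subtype :=
      Subgroup.mem_map_of_mem N.subtype u.2
    have hv : ((v : ↥N) : G) ∈ (P : Subgroup ↥N).map N.subtype :=
      Subgroup.mem_map_of_mem N.subtype v.2
    have := aux_pgroup_comm hA hq hmap hu hv
    show u * v = v * u
    exact Subtype.ext (Subtype.ext this)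
  have : a' * b' = b' * a' := by
    calc a' * b' = e (e.symm a' * e.symm b') := by rw [map_mul, e.apply_symm_apply,
          e.apply_symm_apply]
      _ = e (e.symm b' * e.symm a') := by rw [hcomm]
      _ = b' * a' := by rw [map_mul, e.apply_symm_apply, e.apply_symm_apply]
  exact congrArg Subtype.val this

/-- If `H` is normal and all elements of `K` commute, then `⁅H ⊔ K, H ⊔ K⁆ ≤ H`. -/
lemma aux_commutator_sup_le {H K : Subgroup G} (hHn : H.Normal)
    (hK : ∀ a b : G, a ∈ K → b ∈ K → a * b = b * a) : ⁅H ⊔ K, H ⊔ K⁆ ≤ H := by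
  haveI := hHn
  have hHbot : Subgroup.map (QuotientGroup.mk' H) H = ⊥ :=
    (Subgroup.map_eq_bot_iff H).mpr (QuotientGroup.ker_mk' H).symm.le
  have hmap : (H ⊔ K).map (QuotientGroup.mk' H) = K.map (QuotientGroup.mk' H) := by
    rw [Subgroup.map_sup, hHbot, bot_sup_eq]
  have hbot : (⁅H ⊔ K, H ⊔ K⁆).map (QuotientGroup.mk' H) = ⊥ := by
    rw [Subgroup.map_commutator, hmap, eq_bot_iff]
    refine Subgroup.commutator_le.mpr ?_
    rintro _ ⟨k₁, hk₁, rfl⟩ _ ⟨k₂, hk₂, rfl⟩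
    rw [Subgroup.mem_bot, ← map_commutatorElement,
      commutatorElement_eq_one_iff_commute.mpr (hK k₁ k₂ hk₁ hk₂), map_one]
  have := (Subgroup.map_eq_bot_iff _).mp hbot
  rwa [QuotientGroup.ker_mk'] at this

/-- Elements of two normal nilpotent subgroups of a finite `A`-group commute. -/
lemma aux_base [Finite G] (hA : IsAGroup G) {H K : Subgroup G}
    (hHn : H.Normal) (hHnil : Group.IsNilpotent ↥H)
    (hKn : K.Normal) (hKnil : Group.IsNilpotent ↥K)
    {x y : G} (hx : x ∈ H) (hy : y ∈ K) : x * y = y * x := by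
  set T := H ⊔ K with hT
  have hcommT : ⁅T, T⁆ ≤ H ⊓ K := by
    refine le_inf (aux_commutator_sup_le hHn ?_) ?_
    · exact fun a b ha hb => aux_nilpotent_comm hA hKnil ha hb
    · rw [hT, sup_comm]
      exact aux_commutator_sup_le hKn (fun a b ha hb => aux_nilpotent_comm hA hHnil ha hb)
  have hZ : ∀ z ∈ H ⊓ K, ∀ t ∈ T, z * t = t * z := by
    intro z hz t ht
    have : T ≤ Subgroup.centralizer {z} := by
      refine sup_le ?_ ?_
      · intro h hh
        refine Subgroup.mem_centralizer_iff.mpr ?_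
        intro w hw
        rw [Set.mem_singleton_iff] at hw; rw [hw]
        exact aux_nilpotent_comm hA hHnil hz.1 hh
      · intro k hk
        refine Subgroup.mem_centralizer_iff.mpr ?_
        intro w hw
        rw [Set.mem_singleton_iff] at hw; rw [hw]
        exact aux_nilpotent_comm hA hKnil hz.2 hk
    exact Subgroup.mem_centralizer_iff.mp (this ht) z rfl
  have hTnil : Group.IsNilpotent ↥T := by
    rw [nilpotent_iff_lowerCentralSeries]
    refine ⟨2, ?_⟩
    rw [show (2 : ℕ) = 1 + 1 from rfl, lowerCentralSeries_succ, eq_bot_iff]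
    refine Subgroup.commutator_le.mpr ?_
    intro u hu t _
    rw [Subgroup.mem_bot, commutatorElement_eq_one_iff_commute]
    have hu' : (u : G) ∈ ⁅T, T⁆ := by
      have hmapeq : (Subgroup.lowerCentralSeries (⊤ : Subgroup ↥T) 1).map T.subtype = ⁅T, T⁆ := by
        rw [Subgroup.top_lowerCentralSeries_one, commutator_def, Subgroup.map_commutator,
          ← MonoidHom.range_eq_map, Subgroup.range_subtype]
      rw [← hmapeq]
      exact Subgroup.mem_map_of_mem T.subtype hu
    exact Subtype.ext (hZ (u : G) (hcommT hu') (t : G) t.2)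
  exact aux_nilpotent_comm hA hTnil (le_sup_left (a := H) (b := K) hx)
    (le_sup_right (a := H) (b := K) hy)

/-- The Fitting subgroup of a finite `A`-group is abelian. -/
lemma fitting_comm [Finite G] (hA : IsAGroup G) :
    ∀ x ∈ fitting G, ∀ y ∈ fitting G, x * y = y * x := by
  have step1 : ∀ (H : Subgroup G), (H.Normal ∧ Group.IsNilpotent ↥H) →
      ∀ x ∈ H, ∀ y ∈ fitting G, x * y = y * x := by
    intro H hH x hx y hy
    have hle : fitting G ≤ Subgroup.centralizer {x} := by
      rw [fitting]
      refine iSup₂_le ?_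
      intro K hK k hk
      refine Subgroup.mem_centralizer_iff.mpr ?_
      intro w hw
      rw [Set.mem_singleton_iff] at hw; rw [hw]
      exact aux_base hA hH.1 hH.2 hK.1 hK.2 hx hk
    exact Subgroup.mem_centralizer_iff.mp (hle hy) x rfl
  intro x hx y hy
  have hle : fitting G ≤ Subgroup.centralizer {y} := by
    rw [fitting]
    refine iSup₂_le ?_
    intro H hH h hh
    refine Subgroup.mem_centralizer_iff.mpr ?_
    intro w hw
    rw [Set.mem_singleton_iff] at hw; rw [hw]
    exact (step1 H hH h hh y hy).symm
  exact (Subgroup.mem_centralizer_iff.mp (hle hx) y rfl).symm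

/-- In a finite solvable `A`-group, the centralizer of the Fitting subgroup is contained
in the Fitting subgroup. -/
lemma centralizer_fitting_le [Finite G] [Group.IsSolvable G] (hA : IsAGroup G) :
    Subgroup.centralizer (fitting G : Set G) ≤ fitting G := by
  set F := fitting G with hF
  set C := Subgroup.centralizer (F : Set G) with hC
  have hCn : C.Normal := by
    constructor
    intro n hn g
    rw [hC, Subgroup.mem_centralizer_iff] at hn ⊢
    intro h hh
    have h2 : g⁻¹ * h * g ∈ (F : Set G) := by
      have := (fitting_normal G).conj_mem h hh g⁻¹
      rwa [inv_inv] at this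
    have h3 := hn _ h2
    calc h * (g * n * g⁻¹) = g * ((g⁻¹ * h * g) * n) * g⁻¹ := by group
      _ = g * (n * (g⁻¹ * h * g)) * g⁻¹ := by rw [h3]
      _ = (g * n * g⁻¹) * h := by group
  haveI := hCn
  set D : ℕ → Subgroup G := fun k => (derivedSeries ↥C k).map C.subtype with hD
  have hD0 : D 0 = C := by
    rw [hD]
    show (⊤ : Subgroup ↥C).map C.subtype = C
    rw [← MonoidHom.range_eq_map, Subgroup.range_subtype]
  have hDsucc : ∀ k, D (k + 1) = ⁅D k, D k⁆ := by
    intro k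
    rw [hD]
    show (⁅derivedSeries ↥C k, derivedSeries ↥C k⁆).map C.subtype = _
    rw [Subgroup.map_commutator]
  have hDnormal : ∀ k, (D k).Normal := by
    intro k
    induction k with
    | zero => rw [hD0]; exact hCn
    | succ k ih => rw [hDsucc]; exact @Subgroup.commutator_normal _ _ _ _ ih ih
  have hDle : ∀ k, D k ≤ C := by
    intro k
    rw [hD]
    exact Subgroup.map_subtype_le _
  have key : ∀ k, D (k + 1) ≤ F → D k ≤ F := by
    intro k hk
    set E := D k with hE
    haveI hEn : E.Normal := hDnormal k
    have hEE : ⁅E, E⁆ ≤ F := by rw [hE, ← hDsucc]; exact hk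
    have hEnil : Group.IsNilpotent ↥E := by
      rw [nilpotent_iff_lowerCentralSeries]
      refine ⟨2, ?_⟩
      rw [show (2 : ℕ) = 1 + 1 from rfl, lowerCentralSeries_succ, eq_bot_iff]
      refine Subgroup.commutator_le.mpr ?_
      intro u hu t _
      rw [Subgroup.mem_bot, commutatorElement_eq_one_iff_commute]
      have hu' : (u : G) ∈ ⁅E, E⁆ := by
        have hmapeq : (Subgroup.lowerCentralSeries (⊤ : Subgroup ↥E) 1).map E.subtype = ⁅E, E⁆ := by
          rw [Subgroup.top_lowerCentralSeries_one, commutator_def, Subgroup.map_commutator,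
            ← MonoidHom.range_eq_map, Subgroup.range_subtype]
        rw [← hmapeq]
        exact Subgroup.mem_map_of_mem E.subtype hu
      have huF : (u : G) ∈ F := hEE hu'
      have htC : (t : G) ∈ C := hDle k t.2
      exact Subtype.ext (Subgroup.mem_centralizer_iff.mp htC (u : G) huF)
    have : E ≤ fitting G :=
      le_iSup₂ (f := fun (H : Subgroup G) (_ : H ∈ {H : Subgroup G |
        H.Normal ∧ Group.IsNilpotent ↥H}) => H) E ⟨hEn, hEnil⟩
    rwa [← hF] at this
  obtain ⟨n, hn⟩ := Group.IsSolvable.solvable (G := ↥C)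
  have hdesc : ∀ j, D (n - j) ≤ F := by
    intro j
    induction j with
    | zero =>
      rw [Nat.sub_zero, hD]
      show (derivedSeries ↥C n).map C.subtype ≤ F
      rw [hn, Subgroup.map_bot]
      exact bot_le
    | succ j ih =>
      by_cases hj : j < n
      · refine key (n - (j + 1)) ?_
        have : n - (j + 1) + 1 = n - j := by omega
        rwa [this]
      · have : n - (j + 1) = n - j := by omega
        rwa [this]
  have := hdesc n
  rwa [Nat.sub_self, hD0] at this

/-- Primary decomposition of an element relative to a prime `p`. -/
lemma primary_decomp [Finite G] (p : ℕ) (hp : p.Prime) (f : G) :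
    ∃ a b : G, f = a * b ∧ a ∈ Subgroup.zpowers f ∧ b ∈ Subgroup.zpowers f ∧
      (∃ k : ℕ, a ^ p ^ k = 1) ∧ Nat.Coprime (orderOf b) p := by
  have hford : orderOf f ≠ 0 := by
    intro h0
    have h1 : orderOf f ∣ Nat.card G := orderOf_dvd_natCard f
    rw [h0] at h1
    exact Nat.card_pos.ne' (Nat.eq_zero_of_zero_dvd h1)
  set n := orderOf f with hn
  set e := n.factorization p with he
  set m := ordCompl[p] n with hm
  have hco : Nat.Coprime (p ^ e) m := (Nat.coprime_ordCompl hp hford).pow_left e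
  have hnm : p ^ e * m = n := Nat.ordProj_mul_ordCompl_eq_self n p
  obtain ⟨i, hi1, hi2⟩ := Nat.chineseRemainder hco 1 0
  obtain ⟨j, hj1, hj2⟩ := Nat.chineseRemainder hco 0 1
  have hmi : m ∣ i := (Nat.modEq_zero_iff_dvd).mp hi2
  have hpj : p ^ e ∣ j := (Nat.modEq_zero_iff_dvd).mp hj1
  refine ⟨f ^ i, f ^ j, ?_, Subgroup.npow_mem_zpowers f i, Subgroup.npow_mem_zpowers f j,
    ⟨e, ?_⟩, ?_⟩
  · have hij : i + j ≡ 1 [MOD n] := by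
      rw [← hnm]
      exact (Nat.modEq_and_modEq_iff_modEq_mul hco).mp
        ⟨by simpa using hi1.add hj1, by simpa using hi2.add hj2⟩
    rw [← pow_add]
    have := pow_eq_pow_iff_modEq (x := f) (n := i + j) (m := 1)
    rw [← hn] at this
    rw [this.mpr hij, pow_one]
  · rw [← pow_mul]
    refine orderOf_dvd_iff_pow_eq_one.mp ?_
    rw [← hn, ← hnm]
    exact Nat.Coprime.mul_dvd_of_dvd_of_dvd hco (Dvd.intro_left i rfl)
      (hmi.trans (Dvd.intro (p ^ e) rfl))
  · have hbm : orderOf (f ^ j) ∣ m := by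
      refine orderOf_dvd_iff_pow_eq_one.mpr ?_
      rw [← pow_mul]
      refine orderOf_dvd_iff_pow_eq_one.mp ?_
      rw [← hn, ← hnm]
      exact Nat.Coprime.mul_dvd_of_dvd_of_dvd hco
        (hpj.trans (Dvd.intro m rfl)) (Dvd.intro_left j rfl)
    exact Nat.Coprime.coprime_dvd_left hbm (Nat.coprime_ordCompl hp hford).symm

/-- If `B` is normal, then the relative index of `C` in `B` divides the index of `C`. -/
lemma aux_relIndex_dvd {X : Type*} [Group X] [Finite X]
    (Cg B : Subgroup X) (hBn : B.Normal) : Cg.relIndex B ∣ Cg.index := by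
  haveI := hBn
  have h1 : (Cg ⊓ B).relIndex B * B.relIndex (B ⊔ Cg) = (Cg ⊓ B).relIndex (B ⊔ Cg) :=
    Subgroup.relIndex_mul_relIndex _ _ _ inf_le_right le_sup_left
  have h2 : (Cg ⊓ B).relIndex Cg * Cg.relIndex (B ⊔ Cg) = (Cg ⊓ B).relIndex (B ⊔ Cg) :=
    Subgroup.relIndex_mul_relIndex _ _ _ inf_le_left le_sup_right
  rw [Subgroup.inf_relIndex_right, Subgroup.relIndex_sup_left] at h1
  rw [Subgroup.inf_relIndex_left] at h2
  have hne : B.relIndex Cg ≠ 0 := Subgroup.index_ne_zero_of_finite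
  have heq : Cg.relIndex B = Cg.relIndex (B ⊔ Cg) := by
    have h3 : B.relIndex Cg * Cg.relIndex B = B.relIndex Cg * Cg.relIndex (B ⊔ Cg) := by
      rw [mul_comm (B.relIndex Cg) (Cg.relIndex B), h1, ← h2]
    exact Nat.eq_of_mul_eq_mul_left (Nat.pos_of_ne_zero hne) h3
  rw [heq]
  exact Dvd.intro _ (Subgroup.relIndex_mul_index le_sup_right)

end AuxLemmas

/-- Let `G` be a finite solvable `A`-group, `p` a prime, `F = F(G)` and
`F₂ = F₂(G)` the second Fitting subgroup (the preimage in `G` of `F(G/F)`). If `g ∈ F₂`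
is such that `Ind(F₂, g)` is a power of `p`, then `p` does not divide `Ind(G/F, gF)`. -/
theorem stmt_16 (G : Type*) [Group G] [Finite G] [Group.IsSolvable G] (hA : IsAGroup G)
    (p : ℕ) (hp : p.Prime)
    (g : G) (hg : g ∈ (fitting (G ⧸ fitting G)).comap (QuotientGroup.mk' (fitting G)))
    (hind : ∃ k : ℕ, (Subgroup.centralizer
        {(⟨g, hg⟩ : ↥((fitting (G ⧸ fitting G)).comap (QuotientGroup.mk' (fitting G))))}).index
      = p ^ k) :
    ¬ p ∣ (Subgroup.centralizer {(g : G ⧸ fitting G)}).index := by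
  intro hdvd
  haveI : Fact p.Prime := ⟨hp⟩
  set F := fitting G with hF
  set F₂ := (fitting (G ⧸ fitting G)).comap (QuotientGroup.mk' (fitting G)) with hF₂
  have hFcomm := fitting_comm hA
  -- the subgroup of p'-elements of F
  let B : Subgroup G :=
    { carrier := {x : G | x ∈ fitting G ∧ Nat.Coprime (orderOf x) p}
      one_mem' := ⟨Subgroup.one_mem _, by simp⟩
      mul_mem' := by
        rintro x y ⟨hxF, hxo⟩ ⟨hyF, hyo⟩
        refine ⟨Subgroup.mul_mem _ hxF hyF, ?_⟩
        have hc : Commute x y := hFcomm x hxF y hyF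
        have h1 : orderOf (x * y) ∣ orderOf x * orderOf y :=
          hc.orderOf_mul_dvd_lcm.trans (Nat.lcm_dvd (dvd_mul_right _ _) (dvd_mul_left _ _))
        exact Nat.Coprime.coprime_dvd_left h1 (Nat.Coprime.mul hxo hyo)
      inv_mem' := by
        rintro x ⟨h1, h2⟩
        exact ⟨Subgroup.inv_mem _ h1, by rwa [orderOf_inv]⟩ }
  have hBmem : ∀ {x : G}, x ∈ B ↔ x ∈ fitting G ∧ Nat.Coprime (orderOf x) p := Iff.rfl
  have hBn : B.Normal := by
    constructor
    rintro x ⟨hxF, hxo⟩ c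
    refine ⟨(fitting_normal G).conj_mem x hxF c, ?_⟩
    have : orderOf (c * x * c⁻¹) = orderOf x := by
      have := orderOf_injective (MulAut.conj c).toMonoidHom
        (MulEquiv.injective (MulAut.conj c)) x
      simpa [MulAut.conj_apply] using this
    rwa [this]
  -- the subgroup of p-elements of F
  let Fp : Subgroup G :=
    { carrier := {x : G | x ∈ fitting G ∧ ∃ k : ℕ, x ^ p ^ k = 1}
      one_mem' := ⟨Subgroup.one_mem _, 0, by simp⟩
      mul_mem' := by
        rintro x y ⟨hxF, k, hk⟩ ⟨hyF, l, hl⟩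
        refine ⟨Subgroup.mul_mem _ hxF hyF, k + l, ?_⟩
        have hc : Commute x y := hFcomm x hxF y hyF
        rw [hc.mul_pow, pow_add, pow_mul, hk, one_pow, one_mul, mul_comm (p ^ k),
          pow_mul, hl, one_pow]
      inv_mem' := by
        rintro x ⟨h1, k, hk⟩
        exact ⟨Subgroup.inv_mem _ h1, k, by rw [inv_pow, hk, inv_one]⟩ }
  have hFpn : Fp.Normal := by
    constructor
    rintro x ⟨hxF, k, hk⟩ c
    refine ⟨(fitting_normal G).conj_mem x hxF c, k, ?_⟩
    rw [conj_pow, hk, mul_one, mul_inv_cancel]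
  have hFpP : IsPGroup p Fp := by
    intro x
    obtain ⟨k, hk⟩ := x.2.2
    exact ⟨k, Subtype.ext (by rw [SubmonoidClass.coe_pow]; exact hk)⟩
  -- Step 1: g commutes with every element of B
  have hBF₂ : B ≤ F₂ := by
    intro x hx
    rw [hF₂, Subgroup.mem_comap]
    have : QuotientGroup.mk' (fitting G) x = 1 := by
      rw [← MonoidHom.mem_ker, QuotientGroup.ker_mk']
      exact hx.1
    rw [this]
    exact Subgroup.one_mem _
  have hBg : ∀ x ∈ B, g * x = x * g := by
    obtain ⟨k, hk⟩ := hind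
    set gg : ↥F₂ := ⟨g, hg⟩ with hgg
    set C' : Subgroup ↥F₂ := Subgroup.centralizer {gg} with hC'
    set B₂ : Subgroup ↥F₂ := B.subgroupOf F₂ with hB₂
    have hB₂n : B₂.Normal := by
      rw [hB₂]
      haveI := hBn
      infer_instance
    have hd1 : C'.relIndex B₂ ∣ p ^ k := by
      rw [← hk]
      exact aux_relIndex_dvd C' B₂ hB₂n
    have hd2 : C'.relIndex B₂ ∣ Nat.card ↥B₂ := by
      have : C'.relIndex B₂ = (C'.subgroupOf B₂).index := rfl
      rw [this]
      exact Subgroup.index_dvd_card _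
    have hcard : Nat.card ↥B₂ = Nat.card ↥B :=
      Nat.card_congr (Subgroup.subgroupOfEquivOfLe hBF₂).toEquiv
    have hpB : ¬ p ∣ Nat.card ↥B := by
      intro hpd
      obtain ⟨x, hx⟩ := exists_prime_orderOf_dvd_card' (G := ↥B) p hpd
      have h1 : orderOf ((x : G)) = orderOf x :=
        orderOf_injective B.subtype B.subtype_injective x
      have h2 : Nat.Coprime (orderOf (x : G)) p := x.2.2
      rw [h1, hx] at h2
      have hp1 : p = 1 := by rwa [Nat.Coprime, Nat.gcd_self] at h2
      exact hp.one_lt.ne' hp1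
    have hco : Nat.Coprime (p ^ k) (Nat.card ↥B₂) := by
      rw [hcard]
      exact ((Nat.Prime.coprime_iff_not_dvd hp).mpr hpB).pow_left k
    have hone : C'.relIndex B₂ = 1 := by
      have := Nat.dvd_gcd hd1 hd2
      rw [Nat.Coprime] at hco
      rw [hco] at this
      exact Nat.dvd_one.mp this
    have hBC : B₂ ≤ C' := Subgroup.relIndex_eq_one.mp hone
    intro x hx
    have hx2 : (⟨x, hBF₂ hx⟩ : ↥F₂) ∈ B₂ := Subgroup.mem_subgroupOf.mpr hx
    have := Subgroup.mem_centralizer_iff.mp (hBC hx2) gg rfl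
    exact congrArg Subtype.val this
  -- Step 2: pick a Sylow p-subgroup containing Fp
  obtain ⟨P, hFpLe⟩ := hFpP.exists_le_sylow
  have hPcomm : ∀ u v : G, u ∈ (P : Subgroup G) → v ∈ (P : Subgroup G) → u * v = v * u :=
    fun u v hu hv => congrArg Subtype.val (hA p hp P ⟨u, hu⟩ ⟨v, hv⟩)
  -- Step 3: for x in P, the commutator [x,g] lies in F
  have key : ∀ x ∈ (P : Subgroup G), x * g * x⁻¹ * g⁻¹ ∈ F := by
    intro x hx
    set c := x * g * x⁻¹ * g⁻¹ with hc
    have hcF : c ∈ Subgroup.centralizer ((fitting G : Subgroup G) : Set G) := by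
      rw [Subgroup.mem_centralizer_iff]
      intro f hf
      obtain ⟨a, b, hfab, haz, hbz, ⟨k, hak⟩, hbo⟩ := primary_decomp p hp f
      have haF : a ∈ fitting G := Subgroup.zpowers_le.mpr hf haz
      have hbF : b ∈ fitting G := Subgroup.zpowers_le.mpr hf hbz
      have haFp : a ∈ Fp := ⟨haF, k, hak⟩
      have hbB : b ∈ B := ⟨hbF, hbo⟩
      have hca : Commute c a := by
        have h1 : Commute x a := hPcomm x a hx (hFpLe haFp)
        have h2 : Commute (g * x⁻¹ * g⁻¹) a := by
          have haconj : g⁻¹ * a * g ∈ Fp := by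
            have := hFpn.conj_mem a haFp g⁻¹
            rwa [inv_inv] at this
          have h3 : x⁻¹ * (g⁻¹ * a * g) = (g⁻¹ * a * g) * x⁻¹ :=
            hPcomm _ _ (Subgroup.inv_mem _ hx) (hFpLe haconj)
          show (g * x⁻¹ * g⁻¹) * a = a * (g * x⁻¹ * g⁻¹)
          calc (g * x⁻¹ * g⁻¹) * a = g * (x⁻¹ * (g⁻¹ * a * g)) * g⁻¹ := by group
            _ = g * ((g⁻¹ * a * g) * x⁻¹) * g⁻¹ := by rw [h3]
            _ = a * (g * x⁻¹ * g⁻¹) := by group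
        have hceq : c = x * (g * x⁻¹ * g⁻¹) := by rw [hc]; group
        rw [hceq]
        exact h1.mul_left h2
      have hcb : Commute c b := by
        have h1 : Commute g⁻¹ b := (Commute.inv_left (hBg b hbB))
        have h2 : Commute (x * g * x⁻¹) b := by
          have hbconj : x⁻¹ * b * x ∈ B := by
            have := hBn.conj_mem b hbB x⁻¹
            rwa [inv_inv] at this
          have h3 : g * (x⁻¹ * b * x) = (x⁻¹ * b * x) * g := hBg _ hbconj
          show (x * g * x⁻¹) * b = b * (x * g * x⁻¹)
          calc (x * g * x⁻¹) * b = x * (g * (x⁻¹ * b * x)) * x⁻¹ := by group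
            _ = x * ((x⁻¹ * b * x) * g) * x⁻¹ := by rw [h3]
            _ = b * (x * g * x⁻¹) := by group
        have hceq : c = (x * g * x⁻¹) * g⁻¹ := by rw [hc]
        rw [hceq]
        exact h2.mul_left h1
      have : Commute c f := by rw [hfab]; exact hca.mul_right hcb
      exact this.symm
    exact centralizer_fitting_le hA hcF
  -- Step 4: conclude
  have hle : (P : Subgroup G).map (QuotientGroup.mk' F) ≤
      Subgroup.centralizer {(g : G ⧸ fitting G)} := by
    rintro _ ⟨x, hx, rfl⟩
    rw [Subgroup.mem_centralizer_iff]
    intro w hw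
    rw [Set.mem_singleton_iff] at hw; subst hw
    open scoped commutatorElement in
    have hcF : ⁅x, g⁆ ∈ F := key x hx
    open scoped commutatorElement in
    have h1 : QuotientGroup.mk' F ⁅x, g⁆ = 1 := by
      rw [← MonoidHom.mem_ker, QuotientGroup.ker_mk']
      exact hcF
    rw [map_commutatorElement] at h1
    have h2 : Commute (QuotientGroup.mk' F x) (QuotientGroup.mk' F g) :=
      commutatorElement_eq_one_iff_commute.mp h1
    exact (h2.symm : _)
  have h1 : (Subgroup.centralizer {(g : G ⧸ fitting G)}).index ∣
      ((P : Subgroup G).map (QuotientGroup.mk' F)).index :=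
    Subgroup.index_dvd_of_le hle
  have h2 : ((P : Subgroup G).map (QuotientGroup.mk' F)).index ∣ (P : Subgroup G).index :=
    Subgroup.index_map_dvd _ (QuotientGroup.mk'_surjective F)
  haveI : Finite (Sylow p G) :=
    Finite.of_injective (fun Q : Sylow p G => (Q : Subgroup G))
      (fun Q R h => Sylow.ext h)
  have h3 : ¬ p ∣ (P : Subgroup G).index := P.not_dvd_index
  exact h3 (hdvd.trans (h1.trans h2))
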